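/- A topological space (X, 𝒯) is a GO-space (i.e., homeomorphic to a topological subspace of a linearly ordered topological space) if and only if there exist two nests 𝓛 and 𝓡 of open subsets of X such that 𝓛 ∪ 𝓡 T₁-separates X and 𝓛 ∪ 𝓡 is a subbasis for 𝒯. -/

import Mathlib

open Topology

/-- A nest on `X`: a family of subsets linearly ordered by inclusion. -/
def IsNest {X : Type*} (𝓛 : Set (Set X)) : Prop :=
  ∀ M ∈ 𝓛, ∀ N ∈ 𝓛, M ⊆ N ∨ N ⊆ M

/-- `𝓢` T₁-separates `X`. -/
def T1Sep {X : Type*} (𝓢 : Set (Set X)) : Prop :=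
  ∀ x y : X, x ≠ y → ∃ L ∈ 𝓢, ∃ L' ∈ 𝓢, (x ∈ L ∧ y ∉ L) ∧ (y ∈ L' ∧ x ∉ L')

/-- The order topology of a relation `R`: generated by the rays
`{x | R x a}` and `{x | R a x}`, `a ∈ X`. -/
def orderTopologyOf {X : Type*} (R : X → X → Prop) : TopologicalSpace X :=
  TopologicalSpace.generateFrom
    ({S | ∃ a, S = {x | R x a}} ∪ {S | ∃ a, S = {x | R a x}})

/-- `(X, t)` is a GO-space: it is homeomorphic to a topological subspace of a
linearly ordered topological space. -/
def IsGOSpace {X : Type u} (t : TopologicalSpace X) : Prop :=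
  ∃ (Y : Type u) (_ : LinearOrder Y) (s : Set Y),
    Nonempty (@Homeomorph X s t
      (TopologicalSpace.induced Subtype.val (orderTopologyOf (fun a b : Y => a < b))))

set_option linter.unusedSectionVars false

namespace VDW

universe u
variable {X : Type u}

section Defs
variable (𝓛 𝓡 : Set (Set X))

def RelA (x y : X) : Prop := ∃ L ∈ 𝓛, x ∈ L ∧ y ∉ L

def Slt (x y : X) : Prop := RelA 𝓛 x y ∧ RelA 𝓡 y x

def SIio (a : X) : Set X := {x | Slt 𝓛 𝓡 x a}

def SIoi (a : X) : Set X := {x | Slt 𝓛 𝓡 a x}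

def IsLow (D : Set X) : Prop := ∀ ⦃x y⦄, Slt 𝓛 𝓡 x y → y ∈ D → x ∈ D

def HasMin (S : Set X) : Prop := ∃ m ∈ S, ∀ y ∈ S, ¬ Slt 𝓛 𝓡 y m

def HasMax (S : Set X) : Prop := ∃ m ∈ S, ∀ y ∈ S, ¬ Slt 𝓛 𝓡 m y

def Good (p : Set X × Fin 3) : Prop :=
  (p.2 = 0 ∧ p.1 ∈ 𝓛 ∧ ¬ HasMin 𝓛 𝓡 p.1ᶜ) ∨
  (p.2 = 1 ∧ p.1ᶜ ∈ 𝓡 ∧ ¬ HasMax 𝓛 𝓡 p.1) ∨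
  (p.2 = 2 ∧ ∃ a, p.1 = SIio 𝓛 𝓡 a)

/-- the raw linear order on the LOTS we build -/
def YLt (a b : {p : Set X × Fin 3 // Good 𝓛 𝓡 p}) : Prop :=
  a.1.1 ⊂ b.1.1 ∨ (a.1.1 = b.1.1 ∧ a.1.2 < b.1.2)

def YLe (a b : {p : Set X × Fin 3 // Good 𝓛 𝓡 p}) : Prop :=
  a.1.1 ⊂ b.1.1 ∨ (a.1.1 = b.1.1 ∧ a.1.2 ≤ b.1.2)

def emb (x : X) : {p : Set X × Fin 3 // Good 𝓛 𝓡 p} :=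
  ⟨(SIio 𝓛 𝓡 x, 2), Or.inr (Or.inr ⟨rfl, x, rfl⟩)⟩

end Defs

section Lemmas
variable {𝓛 𝓡 : Set (Set X)}

theorem relA_asymm (hN : IsNest 𝓛) {x y : X} (h : RelA 𝓛 x y) : ¬ RelA 𝓛 y x := by
  rintro ⟨L', hL', hy', hx'⟩
  obtain ⟨L, hLm, hx, hy⟩ := h
  rcases hN L hLm L' hL' with hs | hs
  · exact hx' (hs hx)
  · exact hy (hs hy')

theorem relA_trans (hN : IsNest 𝓛) {x y z : X} (h : RelA 𝓛 x y) (h' : RelA 𝓛 y z) :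
    RelA 𝓛 x z := by
  obtain ⟨L, hLm, hx, hy⟩ := h
  obtain ⟨L', hL'm, hy', hz⟩ := h'
  rcases hN L hLm L' hL'm with hs | hs
  · exact ⟨L', hL'm, hs hx, hz⟩
  · exact absurd (hs hy') hy

variable (hL : IsNest 𝓛) (hR : IsNest 𝓡) (hsep : T1Sep (𝓛 ∪ 𝓡))
include hL hR

theorem slt_irrefl (x : X) : ¬ Slt 𝓛 𝓡 x x := by
  rintro ⟨⟨L, _, hx, hx'⟩, _⟩; exact hx' hx

theorem slt_trans {x y z : X} (h : Slt 𝓛 𝓡 x y) (h' : Slt 𝓛 𝓡 y z) : Slt 𝓛 𝓡 x z :=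
  ⟨relA_trans hL h.1 h'.1, relA_trans hR h'.2 h.2⟩

theorem slt_asymm {x y : X} (h : Slt 𝓛 𝓡 x y) : ¬ Slt 𝓛 𝓡 y x :=
  fun h' => relA_asymm hL h.1 h'.1

include hsep in
theorem slt_trichotomy {x y : X} (hxy : x ≠ y) : Slt 𝓛 𝓡 x y ∨ Slt 𝓛 𝓡 y x := by
  obtain ⟨L, hLm, L', hL'm, ⟨hxL, hyL⟩, hyL', hxL'⟩ := hsep x y hxy
  rcases hLm with hLm | hLm <;> rcases hL'm with hL'm | hL'm
  · rcases hL L hLm L' hL'm with hs | hs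
    · exact absurd (hs hxL) hxL'
    · exact absurd (hs hyL') hyL
  · exact Or.inl ⟨⟨L, hLm, hxL, hyL⟩, ⟨L', hL'm, hyL', hxL'⟩⟩
  · exact Or.inr ⟨⟨L', hL'm, hyL', hxL'⟩, ⟨L, hLm, hxL, hyL⟩⟩
  · rcases hR L hLm L' hL'm with hs | hs
    · exact absurd (hs hxL) hxL'
    · exact absurd (hs hyL') hyL

theorem low_of_memL {L : Set X} (hLm : L ∈ 𝓛) : IsLow 𝓛 𝓡 L := by
  intro x y hxy hy
  by_contra hx
  exact relA_asymm hL hxy.1 ⟨L, hLm, hy, hx⟩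

theorem low_complR {R : Set X} (hRm : R ∈ 𝓡) : IsLow 𝓛 𝓡 Rᶜ := by
  intro x y hxy hy hx
  exact relA_asymm hR hxy.2 ⟨R, hRm, hx, hy⟩

theorem low_SIio (a : X) : IsLow 𝓛 𝓡 (SIio 𝓛 𝓡 a) :=
  fun _ _ hxy hy => slt_trans hL hR hxy hy

include hsep in
theorem low_comparable {D D' : Set X} (hD : IsLow 𝓛 𝓡 D) (hD' : IsLow 𝓛 𝓡 D') :
    D ⊆ D' ∨ D' ⊆ D := by
  by_contra hc
  push_neg at hc
  obtain ⟨d, hdD, hdD'⟩ := Set.not_subset.1 hc.1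
  obtain ⟨d', hd'D', hd'D⟩ := Set.not_subset.1 hc.2
  have hne : d ≠ d' := fun h => hdD' (h ▸ hd'D')
  rcases slt_trichotomy hL hR hsep hne with h | h
  · exact hdD' (hD' h hd'D')
  · exact hd'D (hD h hdD)

include hsep in
theorem SIio_eq (a : X) : SIio 𝓛 𝓡 a = ⋃₀ {L | L ∈ 𝓛 ∧ a ∉ L} := by
  ext x
  constructor
  · rintro ⟨⟨L, hLm, hx, ha⟩, -⟩
    exact ⟨L, ⟨hLm, ha⟩, hx⟩
  · rintro ⟨L, ⟨hLm, ha⟩, hx⟩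
    have hne : x ≠ a := fun h => ha (h ▸ hx)
    rcases slt_trichotomy hL hR hsep hne with h | h
    · exact h
    · obtain ⟨⟨L', hL'm, ha', hx'⟩, -⟩ := h
      rcases hL L hLm L' hL'm with hs | hs
      · exact absurd (hs hx) hx'
      · exact absurd (hs ha') ha

include hsep in
theorem SIoi_eq (a : X) : SIoi 𝓛 𝓡 a = ⋃₀ {R | R ∈ 𝓡 ∧ a ∉ R} := by
  ext x
  constructor
  · rintro ⟨-, ⟨R, hRm, hx, ha⟩⟩
    exact ⟨R, ⟨hRm, ha⟩, hx⟩
  · rintro ⟨R, ⟨hRm, ha⟩, hx⟩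
    have hne : a ≠ x := fun h => ha (h ▸ hx)
    rcases slt_trichotomy hL hR hsep hne with h | h
    · exact h
    · obtain ⟨-, ⟨R', hR'm, ha', hx'⟩⟩ := h
      rcases hR R hRm R' hR'm with hs | hs
      · exact absurd (hs hx) hx'
      · exact absurd (hs ha') ha

include hsep in
theorem isOpen_SIio (a : X) : IsOpen[TopologicalSpace.generateFrom (𝓛 ∪ 𝓡)] (SIio 𝓛 𝓡 a) := by
  rw [SIio_eq hL hR hsep]
  letI := TopologicalSpace.generateFrom (𝓛 ∪ 𝓡)
  refine isOpen_sUnion ?_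
  rintro L ⟨hLm, -⟩
  exact TopologicalSpace.GenerateOpen.basic L (Or.inl hLm)

include hsep in
theorem isOpen_SIoi (a : X) : IsOpen[TopologicalSpace.generateFrom (𝓛 ∪ 𝓡)] (SIoi 𝓛 𝓡 a) := by
  rw [SIoi_eq hL hR hsep]
  letI := TopologicalSpace.generateFrom (𝓛 ∪ 𝓡)
  refine isOpen_sUnion ?_
  rintro R ⟨hRm, -⟩
  exact TopologicalSpace.GenerateOpen.basic R (Or.inr hRm)

include hsep in
theorem isOpen_low_noMax {D : Set X} (hD : IsLow 𝓛 𝓡 D) (h : ¬ HasMax 𝓛 𝓡 D) :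
    IsOpen[TopologicalSpace.generateFrom (𝓛 ∪ 𝓡)] D := by
  have hDeq : D = ⋃₀ {S | ∃ m ∈ D, S = SIio 𝓛 𝓡 m} := by
    ext x
    constructor
    · intro hx
      simp only [HasMax, not_exists] at h
      have := h x
      push_neg at this
      obtain ⟨y, hy, hxy⟩ := this hx
      exact ⟨SIio 𝓛 𝓡 y, ⟨y, hy, rfl⟩, hxy⟩
    · rintro ⟨S, ⟨m, hm, rfl⟩, hx⟩
      exact hD hx hm
  rw [hDeq]
  letI := TopologicalSpace.generateFrom (𝓛 ∪ 𝓡)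
  refine isOpen_sUnion ?_
  rintro S ⟨m, -, rfl⟩
  exact isOpen_SIio hL hR hsep m

include hsep in
theorem isOpen_compl_low_noMin {D : Set X} (hD : IsLow 𝓛 𝓡 D) (h : ¬ HasMin 𝓛 𝓡 Dᶜ) :
    IsOpen[TopologicalSpace.generateFrom (𝓛 ∪ 𝓡)] Dᶜ := by
  have hDeq : Dᶜ = ⋃₀ {S | ∃ m ∈ Dᶜ, S = SIoi 𝓛 𝓡 m} := by
    ext x
    constructor
    · intro hx
      simp only [HasMin, not_exists] at h
      have := h x
      push_neg at this
      obtain ⟨y, hy, hxy⟩ := this hx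
      exact ⟨SIoi 𝓛 𝓡 y, ⟨y, hy, rfl⟩, hxy⟩
    · rintro ⟨S, ⟨m, hm, rfl⟩, hx⟩
      exact fun hxD => hm (hD hx hxD)
  rw [hDeq]
  letI := TopologicalSpace.generateFrom (𝓛 ∪ 𝓡)
  refine isOpen_sUnion ?_
  rintro S ⟨m, -, rfl⟩
  exact isOpen_SIoi hL hR hsep m

theorem good_low {p : Set X × Fin 3} (hp : Good 𝓛 𝓡 p) : IsLow 𝓛 𝓡 p.1 := by
  rcases hp with ⟨-, hm, -⟩ | ⟨-, hm, -⟩ | ⟨-, a, ha⟩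
  · exact low_of_memL hL hR hm
  · simpa using low_complR hL hR hm
  · exact ha ▸ low_SIio hL hR a


-- key pointwise characterisations
include hsep in
theorem ssub_SIio_iff {D : Set X} (hD : IsLow 𝓛 𝓡 D) (x : X) :
    SIio 𝓛 𝓡 x ⊂ D ↔ x ∈ D := by
  constructor
  · intro hss
    obtain ⟨d, hdD, hdx⟩ := Set.exists_of_ssubset hss
    rcases eq_or_ne d x with rfl | hne
    · exact hdD
    · rcases slt_trichotomy hL hR hsep hne with h | h
      · exact absurd h hdx
      · exact hD h hdD
  · intro hx
    refine Set.ssubset_iff_of_subset (fun z hz => hD hz hx) |>.2 ⟨x, hx, slt_irrefl hL hR x⟩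

include hsep in
theorem sub_SIio_iff {D : Set X} (hD : IsLow 𝓛 𝓡 D) (x : X) :
    D ⊆ SIio 𝓛 𝓡 x ↔ x ∉ D := by
  constructor
  · intro hsub hx
    exact slt_irrefl hL hR x (hsub hx)
  · intro hx y hy
    have hne : y ≠ x := fun h => hx (h ▸ hy)
    rcases slt_trichotomy hL hR hsep hne with h | h
    · exact h
    · exact absurd (hD h hy) hx

include hsep in
theorem SIio_ssub_SIio_iff (a x : X) :
    SIio 𝓛 𝓡 a ⊂ SIio 𝓛 𝓡 x ↔ Slt 𝓛 𝓡 a x := by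
  constructor
  · intro hss
    obtain ⟨d, hdx, hda⟩ := Set.exists_of_ssubset hss
    rcases eq_or_ne d a with rfl | hne
    · exact hdx
    · rcases slt_trichotomy hL hR hsep hne with h | h
      · exact absurd h hda
      · exact slt_trans hL hR h hdx
  · intro h
    refine Set.ssubset_iff_of_subset (fun z hz => slt_trans hL hR hz h) |>.2
      ⟨a, h, slt_irrefl hL hR a⟩

include hsep in
theorem emb_injective : Function.Injective (emb 𝓛 𝓡) := by
  intro x y hxy
  have hset : SIio 𝓛 𝓡 x = SIio 𝓛 𝓡 y := congrArg (fun p => p.1.1) hxy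
  by_contra hne
  rcases slt_trichotomy hL hR hsep hne with h | h
  · rw [show Slt 𝓛 𝓡 x y = (x ∈ SIio 𝓛 𝓡 y) from rfl, ← hset] at h
    exact slt_irrefl hL hR x h
  · rw [show Slt 𝓛 𝓡 y x = (y ∈ SIio 𝓛 𝓡 x) from rfl, hset] at h
    exact slt_irrefl hL hR y h

include hsep in
theorem preimage_lower (b : {p : Set X × Fin 3 // Good 𝓛 𝓡 p}) :
    (emb 𝓛 𝓡) ⁻¹' {y | YLt 𝓛 𝓡 y b} = b.1.1 := by
  ext x
  have h2 : ¬ ((2 : Fin 3) < b.1.2) := by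
    have := b.1.2.isLt
    omega
  simp only [Set.mem_preimage, Set.mem_setOf_eq, YLt, emb]
  constructor
  · rintro (hss | ⟨-, hlt⟩)
    · exact (ssub_SIio_iff hL hR hsep (good_low hL hR b.2) x).1 hss
    · exact absurd hlt h2
  · intro hx
    exact Or.inl ((ssub_SIio_iff hL hR hsep (good_low hL hR b.2) x).2 hx)

include hsep in
theorem preimage_upper01 (b : {p : Set X × Fin 3 // Good 𝓛 𝓡 p}) (hb : b.1.2 ≠ 2) :
    (emb 𝓛 𝓡) ⁻¹' {y | YLt 𝓛 𝓡 b y} = b.1.1ᶜ := by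
  ext x
  have h2 : b.1.2 < 2 := by
    have := b.1.2.isLt
    rw [Fin.lt_def]
    rcases Fin.ext_iff.not.1 hb with h
    omega
  simp only [Set.mem_preimage, Set.mem_setOf_eq, YLt, emb, Set.mem_compl_iff]
  constructor
  · rintro (hss | ⟨heq, -⟩)
    · exact (sub_SIio_iff hL hR hsep (good_low hL hR b.2) x).1 hss.subset
    · exact (sub_SIio_iff hL hR hsep (good_low hL hR b.2) x).1 heq.subset
  · intro hx
    rcases ((sub_SIio_iff hL hR hsep (good_low hL hR b.2) x).2 hx).ssubset_or_eq with h | h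
    · exact Or.inl h
    · exact Or.inr ⟨h, h2⟩

include hsep in
theorem preimage_upper2 (a : X) :
    (emb 𝓛 𝓡) ⁻¹' {y | YLt 𝓛 𝓡 (emb 𝓛 𝓡 a) y} = SIoi 𝓛 𝓡 a := by
  ext x
  simp only [Set.mem_preimage, Set.mem_setOf_eq, YLt, emb]
  constructor
  · rintro (hss | ⟨heq, hlt⟩)
    · exact (SIio_ssub_SIio_iff hL hR hsep a x).1 hss
    · exact absurd hlt (by omega)
  · intro hx
    exact Or.inl ((SIio_ssub_SIio_iff hL hR hsep a x).2 hx)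

include hsep in
theorem memL_eq_preimage {L : Set X} (hLm : L ∈ 𝓛) :
    ∃ b, L = (emb 𝓛 𝓡) ⁻¹' {y | YLt 𝓛 𝓡 y b} := by
  by_cases hmin : HasMin 𝓛 𝓡 Lᶜ
  · obtain ⟨m, hm, hminm⟩ := hmin
    refine ⟨emb 𝓛 𝓡 m, ?_⟩
    rw [preimage_lower hL hR hsep]
    show L = SIio 𝓛 𝓡 m
    ext z
    constructor
    · intro hz
      have hne : z ≠ m := fun h => hm (h ▸ hz)
      rcases slt_trichotomy hL hR hsep hne with h | h
      · exact h
      · exact absurd (low_of_memL hL hR hLm h hz) hm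
    · intro hz
      by_contra hzL
      exact hminm z hzL hz
  · refine ⟨⟨(L, 0), Or.inl ⟨rfl, hLm, hmin⟩⟩, ?_⟩
    rw [preimage_lower hL hR hsep]

include hsep in
theorem memR_eq_preimage {R : Set X} (hRm : R ∈ 𝓡) :
    ∃ b, R = (emb 𝓛 𝓡) ⁻¹' {y | YLt 𝓛 𝓡 b y} := by
  by_cases hmax : HasMax 𝓛 𝓡 Rᶜ
  · obtain ⟨m, hm, hmaxm⟩ := hmax
    refine ⟨emb 𝓛 𝓡 m, ?_⟩
    rw [preimage_upper2 hL hR hsep]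
    ext z
    constructor
    · intro hz
      have hne : m ≠ z := fun h => hm (h ▸ hz)
      rcases slt_trichotomy hL hR hsep hne with h | h
      · exact h
      · exact absurd (low_complR hL hR hRm h hm) (not_not_intro hz)
    · intro hz
      by_contra hzR
      exact hmaxm z hzR hz
  · refine ⟨⟨(Rᶜ, 1), Or.inr (Or.inl ⟨rfl, by simpa, hmax⟩)⟩, ?_⟩
    rw [preimage_upper01 hL hR hsep _ (by simp), compl_compl]

/-- the linear order on the constructed LOTS -/
noncomputable def mkOrder (hL : IsNest 𝓛) (hR : IsNest 𝓡) (hsep : T1Sep (𝓛 ∪ 𝓡)) :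
    LinearOrder {p : Set X × Fin 3 // Good 𝓛 𝓡 p} where
  le := YLe 𝓛 𝓡
  lt := YLt 𝓛 𝓡
  le_refl a := Or.inr ⟨rfl, le_refl _⟩
  le_trans a b c := by
    rintro (h | ⟨h, hi⟩) (h' | ⟨h', hi'⟩)
    · exact Or.inl (h.trans h')
    · exact Or.inl (h' ▸ h)
    · exact Or.inl (by rw [h]; exact h')
    · exact Or.inr ⟨h.trans h', hi.trans hi'⟩
  lt_iff_le_not_ge a b := by
    constructor
    · rintro (h | ⟨h, hi⟩)
      · refine ⟨Or.inl h, ?_⟩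
        rintro (h' | ⟨h', -⟩)
        · exact ssubset_irrefl _ (h.trans h')
        · rw [h'] at h; exact ssubset_irrefl _ h
      · refine ⟨Or.inr ⟨h, hi.le⟩, ?_⟩
        rintro (h' | ⟨-, hi'⟩)
        · rw [h] at h'; exact ssubset_irrefl _ h'
        · exact absurd hi hi'.not_gt
    · rintro ⟨h | ⟨h, hi⟩, hn⟩
      · exact Or.inl h
      · exact Or.inr ⟨h, lt_of_le_not_ge hi fun hba => hn (Or.inr ⟨h.symm, hba⟩)⟩
  le_antisymm a b := by
    rintro (h | ⟨h, hi⟩) (h' | ⟨h', hi'⟩)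
    · exact absurd (h.trans h') (ssubset_irrefl _)
    · rw [h'] at h; exact absurd h (ssubset_irrefl _)
    · rw [h] at h'; exact absurd h' (ssubset_irrefl _)
    · exact Subtype.ext (Prod.ext h (le_antisymm hi hi'))
  le_total a b := by
    rcases low_comparable hL hR hsep (good_low hL hR a.2) (good_low hL hR b.2) with hs | hs
    · rcases eq_or_ne a.1.1 b.1.1 with heq | hne
      · rcases le_total a.1.2 b.1.2 with h | h
        · exact Or.inl (Or.inr ⟨heq, h⟩)
        · exact Or.inr (Or.inr ⟨heq.symm, h⟩)
      · exact Or.inl (Or.inl (hs.ssubset_of_ne hne))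
    · rcases eq_or_ne a.1.1 b.1.1 with heq | hne
      · rcases le_total a.1.2 b.1.2 with h | h
        · exact Or.inl (Or.inr ⟨heq, h⟩)
        · exact Or.inr (Or.inr ⟨heq.symm, h⟩)
      · exact Or.inr (Or.inl (hs.ssubset_of_ne (Ne.symm hne)))
  toDecidableLE := Classical.decRel _

end Lemmas

end VDW

theorem isGOSpace_iff_nests {X : Type u} (t : TopologicalSpace X) :
    IsGOSpace t ↔
      ∃ 𝓛 𝓡 : Set (Set X), IsNest 𝓛 ∧ IsNest 𝓡 ∧
        (∀ L ∈ 𝓛 ∪ 𝓡, IsOpen[t] L) ∧ T1Sep (𝓛 ∪ 𝓡) ∧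
        t = TopologicalSpace.generateFrom (𝓛 ∪ 𝓡) := by
  constructor
  · rintro ⟨Y, ordY, s, ⟨h⟩⟩
    letI : TopologicalSpace X := t
    letI T : TopologicalSpace Y := orderTopologyOf (fun a b : Y => a < b)
    letI tS : TopologicalSpace ↥s := TopologicalSpace.induced Subtype.val T
    set f : X → Y := fun x => ((h x : ↥s) : Y) with hf
    have hgen : t = TopologicalSpace.generateFrom
        ((f ⁻¹' ·) '' {S | ∃ a, S = {y | y < a}} ∪ (f ⁻¹' ·) '' {S | ∃ a, S = {y | a < y}}) := by
      have h1 : t = TopologicalSpace.induced (⇑h) tS := isInducing_iff _ |>.1 h.isInducing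
      rw [h1]
      show TopologicalSpace.induced (⇑h) (TopologicalSpace.induced Subtype.val T) = _
      rw [induced_compose]
      show TopologicalSpace.induced f T = _
      rw [show T = TopologicalSpace.generateFrom
        ({S | ∃ a, S = {y | y < a}} ∪ {S | ∃ a, S = {y | a < y}}) from rfl,
        induced_generateFrom_eq, Set.image_union]
    have hinjf : Function.Injective f := fun x y hxy => h.injective (Subtype.ext hxy)
    refine ⟨(f ⁻¹' ·) '' {S | ∃ a, S = {y | y < a}}, (f ⁻¹' ·) '' {S | ∃ a, S = {y | a < y}},
      ?_, ?_, ?_, ?_, hgen⟩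
    · rintro M ⟨S, ⟨a, rfl⟩, rfl⟩ N ⟨S', ⟨b, rfl⟩, rfl⟩
      rcases le_total a b with hab | hab
      · exact Or.inl fun z hz => lt_of_lt_of_le hz hab
      · exact Or.inr fun z hz => lt_of_lt_of_le hz hab
    · rintro M ⟨S, ⟨a, rfl⟩, rfl⟩ N ⟨S', ⟨b, rfl⟩, rfl⟩
      rcases le_total b a with hab | hab
      · exact Or.inl fun z hz => lt_of_le_of_lt hab hz
      · exact Or.inr fun z hz => lt_of_le_of_lt hab hz
    · intro L hLm
      rw [hgen]
      exact TopologicalSpace.GenerateOpen.basic L hLm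
    · intro x y hxy
      have hne : f x ≠ f y := fun he => hxy (hinjf he)
      rcases lt_or_gt_of_ne hne with hlt | hlt
      · exact ⟨f ⁻¹' {z | z < f y}, Or.inl ⟨_, ⟨f y, rfl⟩, rfl⟩,
          f ⁻¹' {z | f x < z}, Or.inr ⟨_, ⟨f x, rfl⟩, rfl⟩,
          ⟨hlt, lt_irrefl _⟩, hlt, lt_irrefl _⟩
      · exact ⟨f ⁻¹' {z | f y < z}, Or.inr ⟨_, ⟨f y, rfl⟩, rfl⟩,
          f ⁻¹' {z | z < f x}, Or.inl ⟨_, ⟨f x, rfl⟩, rfl⟩,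
          ⟨hlt, lt_irrefl _⟩, hlt, lt_irrefl _⟩
  · rintro ⟨𝓛, 𝓡, hL, hR, hopen, hsep, ht⟩
    letI O := VDW.mkOrder hL hR hsep
    letI T : TopologicalSpace {p : Set X × Fin 3 // VDW.Good 𝓛 𝓡 p} :=
      orderTopologyOf (VDW.YLt 𝓛 𝓡)
    have hinj : Function.Injective (VDW.emb 𝓛 𝓡) := VDW.emb_injective hL hR hsep
    have key : t = TopologicalSpace.induced (VDW.emb 𝓛 𝓡) T := by
      rw [show T = TopologicalSpace.generateFrom
        ({S | ∃ a : {p : Set X × Fin 3 // VDW.Good 𝓛 𝓡 p}, S = {x | VDW.YLt 𝓛 𝓡 x a}} ∪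
         {S | ∃ a : {p : Set X × Fin 3 // VDW.Good 𝓛 𝓡 p}, S = {x | VDW.YLt 𝓛 𝓡 a x}}) from rfl,
        induced_generateFrom_eq, ht]
      refine le_antisymm (le_generateFrom ?_) (le_generateFrom ?_)
      · rintro S' ⟨S, hS, rfl⟩
        rcases hS with ⟨b, rfl⟩ | ⟨b, rfl⟩
        · rw [VDW.preimage_lower hL hR hsep b]
          rcases b.2 with hg | hg | hg
          · exact TopologicalSpace.GenerateOpen.basic _ (Or.inl hg.2.1)
          · exact VDW.isOpen_low_noMax hL hR hsep (VDW.good_low hL hR b.2) hg.2.2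
          · obtain ⟨-, c, hc⟩ := hg
            rw [hc]
            exact VDW.isOpen_SIio hL hR hsep c
        · rcases b.2 with hg | hg | hg
          · rw [VDW.preimage_upper01 hL hR hsep b (by rw [hg.1]; decide)]
            exact VDW.isOpen_compl_low_noMin hL hR hsep (VDW.good_low hL hR b.2) hg.2.2
          · rw [VDW.preimage_upper01 hL hR hsep b (by rw [hg.1]; decide)]
            exact TopologicalSpace.GenerateOpen.basic _ (Or.inr hg.2.1)
          · obtain ⟨h2, c, hc⟩ := hg
            have hb : b = VDW.emb 𝓛 𝓡 c := Subtype.ext (Prod.ext hc h2)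
            rw [hb, VDW.preimage_upper2 hL hR hsep c]
            exact VDW.isOpen_SIoi hL hR hsep c
      · rintro S' hS'
        rcases hS' with hS' | hS'
        · obtain ⟨b, hb⟩ := VDW.memL_eq_preimage hL hR hsep hS'
          rw [hb]
          exact TopologicalSpace.GenerateOpen.basic _
            ⟨{x | VDW.YLt 𝓛 𝓡 x b}, Or.inl ⟨b, rfl⟩, rfl⟩
        · obtain ⟨b, hb⟩ := VDW.memR_eq_preimage hL hR hsep hS'
          rw [hb]
          exact TopologicalSpace.GenerateOpen.basic _
            ⟨{x | VDW.YLt 𝓛 𝓡 b x}, Or.inr ⟨b, rfl⟩, rfl⟩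
    refine ⟨{p : Set X × Fin 3 // VDW.Good 𝓛 𝓡 p}, O, Set.range (VDW.emb 𝓛 𝓡),
      ⟨@Equiv.toHomeomorphOfIsInducing X _ t
        (TopologicalSpace.induced Subtype.val T)
        (Equiv.ofInjective _ hinj) ?_⟩⟩
    rw [isInducing_iff (tX := t) (tY := TopologicalSpace.induced Subtype.val T),
      induced_compose]
    have hcomp : (Subtype.val ∘ ⇑(Equiv.ofInjective _ hinj)) = VDW.emb 𝓛 𝓡 := rfl
    rw [hcomp]
    exact key
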